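/- Let β ∈ [0, 1/2), T > 0, k ∈ ℕ, and let v : [0,T] → ℝ^k be continuous. Define v̂(τ, ξ) = ∫_{max(τ,ξ)}^{T} v(η) / ((η - τ)^β (η - ξ)^β) dη for τ, ξ ∈ [0,T]. Then v̂ is uniformly continuous on [0,T]²; more precisely, there exists a modulus of continuity ω (depending only on β and T) such that ‖v̂(τ', ξ') - v̂(τ, ξ)‖ ≤ ‖v‖_∞ · ω(|τ' - τ| + |ξ' - ξ|) for all τ, τ', ξ, ξ' ∈ [0,T]. -/

import Mathlib

open MeasureTheory Set
open scoped Interval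

lemma bern {β x y : ℝ} (hβ0 : 0 ≤ β) (hβ1 : β ≤ 1) (hy : 0 < y) (hxy : y ≤ x) :
    y ^ (-β) - x ^ (-β) ≤ β * (x - y) * y ^ (-β - 1) := by
  have hx : 0 < x := hy.trans_le hxy
  set t : ℝ := x / y with ht
  have ht1 : 1 ≤ t := (one_le_div hy).2 hxy
  have ht0 : 0 < t := lt_of_lt_of_le one_pos ht1
  have hb : t ^ β ≤ 1 + β * (t - 1) := by
    have h := rpow_one_add_le_one_add_mul_self (s := t - 1) (by linarith) hβ0 hβ1
    simpa using h
  have ha : (0:ℝ) < t ^ β := Real.rpow_pos_of_pos ht0 β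
  have ha1 : (1:ℝ) ≤ t ^ β := Real.one_le_rpow ht1 hβ0
  have hinv : t ^ (-β) = (t ^ β)⁻¹ := by rw [Real.rpow_neg ht0.le]
  have h2 : t ^ β * (t ^ β)⁻¹ = 1 := mul_inv_cancel₀ ha.ne'
  have key : 1 - t ^ (-β) ≤ β * (t - 1) := by
    rw [hinv]
    nlinarith [sq_nonneg (t ^ β - 1)]
  have hxy' : x ^ (-β) = y ^ (-β) * t ^ (-β) := by
    rw [← Real.mul_rpow hy.le (div_nonneg hx.le hy.le)]
    congr 1
    field_simp
  have h5 : y ^ (-β - 1) = y ^ (-β) / y := by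
    rw [Real.rpow_sub hy, Real.rpow_one]
  have hyb : (0:ℝ) ≤ y ^ (-β) := Real.rpow_nonneg hy.le _
  calc y ^ (-β) - x ^ (-β) = y ^ (-β) * (1 - t ^ (-β)) := by rw [hxy']; ring
    _ ≤ y ^ (-β) * (β * (t - 1)) := mul_le_mul_of_nonneg_left key hyb
    _ = β * (x - y) * y ^ (-β - 1) := by rw [h5, ht]; field_simp

lemma aux_ae {E : Type*} [NormedAddCommGroup E] [NormedSpace ℝ E]
    {β : ℝ} (hβ0 : 0 ≤ β)
    {v : ℝ → E} {σ ξ a b M : ℝ} (hσ : σ ≤ a) (hξ : ξ ≤ a) (hab : a ≤ b)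
    (hM : ∀ η ∈ Icc a b, ‖v η‖ ≤ M) :
    ∀ᵐ t ∂(volume.restrict (Ι a b)),
      ‖((t - σ) ^ (-β) * (t - ξ) ^ (-β)) • v t‖ ≤ M * (t - a) ^ (-(2*β)) := by
  filter_upwards [ae_restrict_mem measurableSet_uIoc] with x hx
  rw [uIoc_of_le hab] at hx
  have hxa : 0 < x - a := sub_pos.2 hx.1
  have h1 : (x - σ) ^ (-β) ≤ (x - a) ^ (-β) :=
    Real.rpow_le_rpow_of_nonpos hxa (by linarith) (by linarith)
  have h2 : (x - ξ) ^ (-β) ≤ (x - a) ^ (-β) :=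
    Real.rpow_le_rpow_of_nonpos hxa (by linarith) (by linarith)
  have hn1 : (0:ℝ) ≤ (x - σ) ^ (-β) := Real.rpow_nonneg (by linarith) _
  have hn2 : (0:ℝ) ≤ (x - ξ) ^ (-β) := Real.rpow_nonneg (by linarith) _
  have hna : (0:ℝ) ≤ (x - a) ^ (-β) := Real.rpow_nonneg hxa.le _
  have hv' : ‖v x‖ ≤ M := hM x ⟨by linarith [hx.1], hx.2⟩
  have hM0 : 0 ≤ M := le_trans (norm_nonneg _) hv'
  rw [norm_smul, norm_mul, Real.norm_eq_abs, Real.norm_eq_abs,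
    abs_of_nonneg hn1, abs_of_nonneg hn2]
  calc (x - σ) ^ (-β) * (x - ξ) ^ (-β) * ‖v x‖
      ≤ (x - a) ^ (-β) * (x - a) ^ (-β) * M :=
        mul_le_mul (mul_le_mul h1 h2 hn2 hna) hv' (norm_nonneg _)
          (mul_nonneg hna hna)
    _ = M * (x - a) ^ (-(2*β)) := by
        rw [← Real.rpow_add hxa, show -β + -β = -(2*β) by ring, mul_comm]

lemma aux_g_int {β a b M : ℝ} (hβ2 : 2*β < 1) :
    IntervalIntegrable (fun η => M * (η - a) ^ (-(2*β))) volume a b := by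
  have h1 : IntervalIntegrable (fun x : ℝ => x ^ (-(2*β))) volume (a - a) (b - a) :=
    intervalIntegral.intervalIntegrable_rpow' (by linarith)
  have h2 := (h1.comp_sub_right a).const_mul M
  simpa using h2

lemma aux_int {E : Type*} [NormedAddCommGroup E] [NormedSpace ℝ E]
    {β : ℝ} (hβ0 : 0 ≤ β) (hβ2 : 2 * β < 1)
    {v : ℝ → E} {σ ξ a b M : ℝ} (hσ : σ ≤ a) (hξ : ξ ≤ a) (hab : a ≤ b)
    (hv : ContinuousOn v (Icc a b)) (hM : ∀ η ∈ Icc a b, ‖v η‖ ≤ M) :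
    IntervalIntegrable (fun η => ((η - σ) ^ (-β) * (η - ξ) ^ (-β)) • v η) volume a b := by
  apply (aux_g_int (a := a) (b := b) (M := M) hβ2).mono_fun' ?_ (aux_ae hβ0 hσ hξ hab hM)
  rw [uIoc_of_le hab]
  apply ContinuousOn.aestronglyMeasurable _ measurableSet_Ioc
  apply ContinuousOn.smul
  · apply ContinuousOn.mul
    · apply ContinuousOn.rpow_const ((continuous_id.sub continuous_const).continuousOn)
      intro x hx
      exact Or.inl (by simp only [Pi.sub_apply, id]; intro h; nlinarith [hx.1, sub_eq_zero.1 h])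
    · apply ContinuousOn.rpow_const ((continuous_id.sub continuous_const).continuousOn)
      intro x hx
      exact Or.inl (by simp only [Pi.sub_apply, id]; intro h; nlinarith [hx.1, sub_eq_zero.1 h])
  · exact hv.mono Ioc_subset_Icc_self

lemma aux_bnd {E : Type*} [NormedAddCommGroup E] [NormedSpace ℝ E]
    {β : ℝ} (hβ0 : 0 ≤ β) (hβ2 : 2 * β < 1)
    {v : ℝ → E} {σ ξ a b M : ℝ} (hσ : σ ≤ a) (hξ : ξ ≤ a) (hab : a ≤ b)
    (hM : ∀ η ∈ Icc a b, ‖v η‖ ≤ M) :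
    ‖∫ η in a..b, ((η - σ) ^ (-β) * (η - ξ) ^ (-β)) • v η‖ ≤
      M * (b - a) ^ (1 - 2*β) / (1 - 2*β) := by
  have hM0 : 0 ≤ M := le_trans (norm_nonneg _) (hM a ⟨le_rfl, hab⟩)
  have key := intervalIntegral.norm_integral_le_abs_of_norm_le
    (aux_ae hβ0 hσ hξ hab hM) (aux_g_int (a := a) (b := b) (M := M) hβ2)
  have hval : (∫ η in a..b, M * (η - a) ^ (-(2*β))) =
      M * ((b - a) ^ (1 - 2*β) / (1 - 2*β)) := by
    rw [intervalIntegral.integral_const_mul]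
    congr 1
    have hc := intervalIntegral.integral_comp_sub_right (a := a) (b := b)
      (fun x : ℝ => x ^ (-(2*β))) a
    rw [hc, sub_self, integral_rpow (Or.inl (by linarith)),
      Real.zero_rpow (by intro h; nlinarith), show -(2*β) + 1 = 1 - 2*β by ring, sub_zero]
  rw [hval] at key
  refine le_trans key ?_
  rw [abs_of_nonneg, mul_div_assoc]
  exact mul_nonneg hM0 (div_nonneg (Real.rpow_nonneg (by linarith) _) (by linarith))

lemma aux_core {E : Type*} [NormedAddCommGroup E] [NormedSpace ℝ E] {β T : ℝ}
    (hβ0 : 0 ≤ β) (hβ2 : 2*β < 1) {v : ℝ → E} (hv : ContinuousOn v (Icc 0 T)) {M : ℝ}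
    (hM : ∀ η ∈ Icc 0 T, ‖v η‖ ≤ M) {σ σ' ξ : ℝ}
    (hσ : σ ∈ Icc 0 T) (hσ' : σ' ∈ Icc 0 T) (hξ : ξ ∈ Icc 0 T) (hss : σ ≤ σ') :
    ‖(∫ η in (max σ' ξ)..T, ((η - σ') ^ (-β) * (η - ξ) ^ (-β)) • v η) -
        ∫ η in (max σ ξ)..T, ((η - σ) ^ (-β) * (η - ξ) ^ (-β)) • v η‖ ≤
      M * (4 / (1 - 2*β)) * (σ' - σ) ^ (1 - 2*β) := by
  rcases eq_or_lt_of_le hss with rfl | hlt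
  · simp [Real.zero_rpow (show (1 - 2*β) ≠ 0 by intro h; nlinarith)]
  have hd : 0 < σ' - σ := sub_pos.2 hlt
  have hp : 0 < 1 - 2*β := by linarith
  have hp1 : 1 - 2*β ≤ 1 := by linarith
  have hM0 : 0 ≤ M := le_trans (norm_nonneg _) (hM 0 ⟨le_rfl, le_trans hσ.1 hσ.2⟩)
  have ha0 : 0 ≤ max σ ξ := le_trans hσ.1 (le_max_left _ _)
  have haT : max σ ξ ≤ T := max_le hσ.2 hξ.2
  have ha'T : max σ' ξ ≤ T := max_le hσ'.2 hξ.2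
  have ha'0 : 0 ≤ max σ' ξ := le_trans hσ'.1 (le_max_left _ _)
  have haa' : max σ ξ ≤ max σ' ξ := max_le_max hss le_rfl
  have hσa : σ ≤ max σ ξ := le_max_left _ _
  have hξa : ξ ≤ max σ ξ := le_max_right _ _
  have hσ'a' : σ' ≤ max σ' ξ := le_max_left _ _
  have hξa' : ξ ≤ max σ' ξ := le_max_right _ _
  have hd' : max σ' ξ ≤ max σ ξ + (σ' - σ) :=
    max_le (by linarith [le_max_left σ ξ]) (by linarith [le_max_right σ ξ])
  have hvs : ∀ c e : ℝ, 0 ≤ c → e ≤ T → ContinuousOn v (Icc c e) :=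
    fun c e hc he => hv.mono (Icc_subset_Icc hc he)
  have hMs : ∀ c e : ℝ, 0 ≤ c → e ≤ T → ∀ η ∈ Icc c e, ‖v η‖ ≤ M :=
    fun c e hc he η hη => hM η ⟨le_trans hc hη.1, le_trans hη.2 he⟩
  have int : ∀ τ₀ c e : ℝ, τ₀ ≤ c → ξ ≤ c → 0 ≤ c → c ≤ e → e ≤ T →
      IntervalIntegrable (fun η => ((η - τ₀) ^ (-β) * (η - ξ) ^ (-β)) • v η) volume c e :=
    fun τ₀ c e h1 h2 h3 h4 h5 => aux_int hβ0 hβ2 h1 h2 h4 (hvs c e h3 h5) (hMs c e h3 h5)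
  have bnd : ∀ τ₀ c e : ℝ, τ₀ ≤ c → ξ ≤ c → 0 ≤ c → c ≤ e → e ≤ T →
      ‖∫ η in c..e, ((η - τ₀) ^ (-β) * (η - ξ) ^ (-β)) • v η‖ ≤
        M * (e - c) ^ (1 - 2*β) / (1 - 2*β) :=
    fun τ₀ c e h1 h2 h3 h4 h5 => aux_bnd hβ0 hβ2 h1 h2 h4 (hMs c e h3 h5)
  have hdp0 : (0:ℝ) ≤ (σ' - σ) ^ (1 - 2*β) := Real.rpow_nonneg hd.le _
  have hq0 : (0:ℝ) ≤ M * (σ' - σ) ^ (1 - 2*β) / (1 - 2*β) :=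
    div_nonneg (mul_nonneg hM0 hdp0) hp.le
  have hmono : ∀ x : ℝ, 0 ≤ x → x ≤ σ' - σ →
      M * x ^ (1 - 2*β) / (1 - 2*β) ≤ M * (σ' - σ) ^ (1 - 2*β) / (1 - 2*β) :=
    fun x h1 h2 => (div_le_div_iff_of_pos_right hp).2
      (mul_le_mul_of_nonneg_left (Real.rpow_le_rpow h1 h2 hp.le) hM0)
  have hfinal : 3 * (M * (σ' - σ) ^ (1 - 2*β) / (1 - 2*β)) + M * (σ' - σ) ^ (1 - 2*β) ≤
      M * (4 / (1 - 2*β)) * (σ' - σ) ^ (1 - 2*β) := by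
    have h1 : M * (σ' - σ) ^ (1 - 2*β) ≤ M * (σ' - σ) ^ (1 - 2*β) / (1 - 2*β) := by
      rw [le_div_iff₀ hp]
      nlinarith [mul_nonneg hM0 hdp0]
    have h2 : M * (4 / (1 - 2*β)) * (σ' - σ) ^ (1 - 2*β) =
        4 * (M * (σ' - σ) ^ (1 - 2*β) / (1 - 2*β)) := by ring
    linarith
  rcases le_or_gt (max σ' ξ + (σ' - σ)) T with hmT | hmT
  · -- main case: split at m = max σ' ξ + (σ' - σ)
    have hm0 : 0 ≤ max σ' ξ + (σ' - σ) := by linarith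
    have ha'm : max σ' ξ ≤ max σ' ξ + (σ' - σ) := by linarith
    have i1 := int σ (max σ ξ) (max σ' ξ) hσa hξa ha0 haa' ha'T
    have i2 := int σ (max σ' ξ) (max σ' ξ + (σ' - σ)) (le_trans hσa haa') (le_trans hξa haa')
      ha'0 ha'm hmT
    have i3 := int σ (max σ' ξ + (σ' - σ)) T (by linarith) (by linarith) hm0 hmT le_rfl
    have i4 := int σ' (max σ' ξ) (max σ' ξ + (σ' - σ)) hσ'a' hξa' ha'0 ha'm hmT
    have i5 := int σ' (max σ' ξ + (σ' - σ)) T (by linarith) (by linarith) hm0 hmT le_rfl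
    have sA := intervalIntegral.integral_add_adjacent_intervals i1 i2
    have sB := intervalIntegral.integral_add_adjacent_intervals (i1.trans i2) i3
    have sC := intervalIntegral.integral_add_adjacent_intervals i4 i5
    have key : (∫ η in (max σ' ξ)..T, ((η - σ') ^ (-β) * (η - ξ) ^ (-β)) • v η) -
        ∫ η in (max σ ξ)..T, ((η - σ) ^ (-β) * (η - ξ) ^ (-β)) • v η =
        (((∫ η in (max σ' ξ)..(max σ' ξ + (σ' - σ)), ((η - σ') ^ (-β) * (η - ξ) ^ (-β)) • v η) -
          ∫ η in (max σ' ξ)..(max σ' ξ + (σ' - σ)), ((η - σ) ^ (-β) * (η - ξ) ^ (-β)) • v η) -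
          ∫ η in (max σ ξ)..(max σ' ξ), ((η - σ) ^ (-β) * (η - ξ) ^ (-β)) • v η) +
        ((∫ η in (max σ' ξ + (σ' - σ))..T, ((η - σ') ^ (-β) * (η - ξ) ^ (-β)) • v η) -
          ∫ η in (max σ' ξ + (σ' - σ))..T, ((η - σ) ^ (-β) * (η - ξ) ^ (-β)) • v η) := by
      rw [← sC, ← sB, ← sA]; abel
    rw [key]
    have B1 : ‖∫ η in (max σ ξ)..(max σ' ξ), ((η - σ) ^ (-β) * (η - ξ) ^ (-β)) • v η‖ ≤
        M * (σ' - σ) ^ (1 - 2*β) / (1 - 2*β) :=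
      le_trans (bnd σ (max σ ξ) (max σ' ξ) hσa hξa ha0 haa' ha'T)
        (hmono _ (by linarith) (by linarith))
    have B2 : ‖∫ η in (max σ' ξ)..(max σ' ξ + (σ' - σ)),
        ((η - σ') ^ (-β) * (η - ξ) ^ (-β)) • v η‖ ≤
        M * (σ' - σ) ^ (1 - 2*β) / (1 - 2*β) :=
      le_trans (bnd σ' (max σ' ξ) (max σ' ξ + (σ' - σ)) hσ'a' hξa' ha'0 ha'm hmT)
        (hmono _ (by linarith) (by linarith))
    have B3 : ‖∫ η in (max σ' ξ)..(max σ' ξ + (σ' - σ)),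
        ((η - σ) ^ (-β) * (η - ξ) ^ (-β)) • v η‖ ≤
        M * (σ' - σ) ^ (1 - 2*β) / (1 - 2*β) :=
      le_trans (bnd σ (max σ' ξ) (max σ' ξ + (σ' - σ)) (le_trans hσa haa') (le_trans hξa haa')
        ha'0 ha'm hmT) (hmono _ (by linarith) (by linarith))
    have B4 : ‖(∫ η in (max σ' ξ + (σ' - σ))..T, ((η - σ') ^ (-β) * (η - ξ) ^ (-β)) • v η) -
        ∫ η in (max σ' ξ + (σ' - σ))..T, ((η - σ) ^ (-β) * (η - ξ) ^ (-β)) • v η‖ ≤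
        M * (σ' - σ) ^ (1 - 2*β) := by
      rcases eq_or_lt_of_le hβ0 with hb0 | hβpos
      · have heq : (fun η => ((η - σ') ^ (-β) * (η - ξ) ^ (-β)) • v η) =
            fun η => ((η - σ) ^ (-β) * (η - ξ) ^ (-β)) • v η := by
          funext η; rw [← hb0]; simp [Real.rpow_zero]
        rw [heq, sub_self, norm_zero]
        exact mul_nonneg hM0 hdp0
      · rw [← intervalIntegral.integral_sub i5 i3]
        have hae : ∀ᵐ t ∂(volume.restrict (Ι (max σ' ξ + (σ' - σ)) T)),
            ‖((t - σ') ^ (-β) * (t - ξ) ^ (-β)) • v t -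
              ((t - σ) ^ (-β) * (t - ξ) ^ (-β)) • v t‖ ≤
            (M * (β * (σ' - σ))) * (t - max σ' ξ) ^ (-(2*β) - 1) := by
          filter_upwards [ae_restrict_mem measurableSet_uIoc] with x hx
          rw [uIoc_of_le hmT] at hx
          have hx1 : max σ' ξ + (σ' - σ) < x := hx.1
          have hxa' : 0 < x - max σ' ξ := by linarith
          have hxσ' : 0 < x - σ' := by linarith
          have hxσ : 0 < x - σ := by linarith
          have hxξ : 0 < x - ξ := by linarith
          have heq : ((x - σ') ^ (-β) * (x - ξ) ^ (-β)) • v x -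
              ((x - σ) ^ (-β) * (x - ξ) ^ (-β)) • v x =
              (((x - σ') ^ (-β) - (x - σ) ^ (-β)) * (x - ξ) ^ (-β)) • v x := by
            rw [← sub_smul, ← sub_mul]
          rw [heq, norm_smul, Real.norm_eq_abs]
          have hmono0 : (x - σ) ^ (-β) ≤ (x - σ') ^ (-β) :=
            Real.rpow_le_rpow_of_nonpos hxσ' (by linarith) (by linarith)
          have hb := bern hβ0 (by linarith : β ≤ 1) hxσ' (by linarith : x - σ' ≤ x - σ)
          rw [show (x - σ) - (x - σ') = σ' - σ by ring] at hb
          have h6 : (x - σ') ^ (-β - 1) ≤ (x - max σ' ξ) ^ (-β - 1) :=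
            Real.rpow_le_rpow_of_nonpos hxa' (by linarith) (by linarith)
          have h7 : (x - ξ) ^ (-β) ≤ (x - max σ' ξ) ^ (-β) :=
            Real.rpow_le_rpow_of_nonpos hxa' (by linarith) (by linarith)
          have h8 : (0:ℝ) ≤ (x - ξ) ^ (-β) := Real.rpow_nonneg hxξ.le _
          have h9 : (0:ℝ) ≤ (x - max σ' ξ) ^ (-β - 1) := Real.rpow_nonneg hxa'.le _
          have h9' : (0:ℝ) ≤ (x - max σ' ξ) ^ (-β) := Real.rpow_nonneg hxa'.le _
          have hvx : ‖v x‖ ≤ M := hM x ⟨by linarith, hx.2⟩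
          rw [abs_of_nonneg (mul_nonneg (by linarith) h8)]
          have hbd0 : (0:ℝ) ≤ β * (σ' - σ) * (x - max σ' ξ) ^ (-β - 1) :=
            mul_nonneg (mul_nonneg hβpos.le hd.le) h9
          calc ((x - σ') ^ (-β) - (x - σ) ^ (-β)) * (x - ξ) ^ (-β) * ‖v x‖
              ≤ (β * (σ' - σ) * (x - max σ' ξ) ^ (-β - 1)) * ((x - max σ' ξ) ^ (-β)) * M := by
                apply mul_le_mul _ hvx (norm_nonneg _) (mul_nonneg hbd0 h9')
                exact mul_le_mul
                  (le_trans hb (mul_le_mul_of_nonneg_left h6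
                    (mul_nonneg hβpos.le hd.le))) h7 h8 hbd0
            _ = (M * (β * (σ' - σ))) * (x - max σ' ξ) ^ (-(2*β) - 1) := by
                have hrw : (x - max σ' ξ) ^ (-β - 1) * (x - max σ' ξ) ^ (-β) =
                    (x - max σ' ξ) ^ (-(2*β) - 1) := by
                  rw [← Real.rpow_add hxa']; congr 1; ring
                rw [show (β * (σ' - σ) * (x - max σ' ξ) ^ (-β - 1)) *
                    ((x - max σ' ξ) ^ (-β)) * M =
                    (M * (β * (σ' - σ))) * ((x - max σ' ξ) ^ (-β - 1) *
                    (x - max σ' ξ) ^ (-β)) by ring, hrw]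
        have hgint : IntervalIntegrable
            (fun η => (M * (β * (σ' - σ))) * (η - max σ' ξ) ^ (-(2*β) - 1)) volume
            (max σ' ξ + (σ' - σ)) T := by
          apply ContinuousOn.intervalIntegrable
          apply ContinuousOn.mul continuousOn_const
          apply ContinuousOn.rpow_const ((continuous_id.sub continuous_const).continuousOn)
          intro x hx
          rw [uIcc_of_le hmT] at hx
          refine Or.inl ?_
          simp only [Pi.sub_apply, id]
          intro h
          have := sub_eq_zero.1 h
          have := hx.1
          linarith
        refine le_trans (intervalIntegral.norm_integral_le_abs_of_norm_le hae hgint) ?_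
        rw [intervalIntegral.integral_const_mul]
        have hval2 : (∫ η in (max σ' ξ + (σ' - σ))..T, (η - max σ' ξ) ^ (-(2*β) - 1)) =
            ((T - max σ' ξ) ^ (-(2*β)) - (σ' - σ) ^ (-(2*β))) / (-(2*β)) := by
          rw [intervalIntegral.integral_comp_sub_right (fun x : ℝ => x ^ (-(2*β) - 1)) (max σ' ξ),
            add_sub_cancel_left,
            integral_rpow (Or.inr ⟨by intro h; nlinarith,
              Set.notMem_uIcc_of_lt hd (by linarith)⟩),
            show -(2*β) - 1 + 1 = -(2*β) by ring]
        rw [hval2]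
        have hTd : σ' - σ ≤ T - max σ' ξ := by linarith
        have hle1 : (T - max σ' ξ) ^ (-(2*β)) ≤ (σ' - σ) ^ (-(2*β)) :=
          Real.rpow_le_rpow_of_nonpos hd hTd (by linarith)
        have hd2β : (0:ℝ) ≤ (σ' - σ) ^ (-(2*β)) := Real.rpow_nonneg hd.le _
        have hTd2β : (0:ℝ) ≤ (T - max σ' ξ) ^ (-(2*β)) := Real.rpow_nonneg (by linarith) _
        have hVval : |((T - max σ' ξ) ^ (-(2*β)) - (σ' - σ) ^ (-(2*β))) / (-(2*β))| ≤
            (σ' - σ) ^ (-(2*β)) / (2*β) := by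
          rw [abs_div, abs_of_neg (by linarith : -(2*β) < 0), abs_sub_comm,
            abs_of_nonneg (by linarith), neg_neg]
          exact (div_le_div_iff_of_pos_right (by linarith)).2 (by linarith)
        rw [abs_mul]
        have hc0 : (0:ℝ) ≤ M * (β * (σ' - σ)) :=
          mul_nonneg hM0 (mul_nonneg hβpos.le hd.le)
        rw [abs_of_nonneg hc0]
        refine le_trans (mul_le_mul_of_nonneg_left hVval hc0) ?_
        have hdd : (σ' - σ) * (σ' - σ) ^ (-(2*β)) = (σ' - σ) ^ (1 - 2*β) := by
          nth_rewrite 1 [← Real.rpow_one (σ' - σ)]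
          rw [← Real.rpow_add hd, show 1 + -(2*β) = 1 - 2*β by ring]
        have heq2 : M * (β * (σ' - σ)) * ((σ' - σ) ^ (-(2*β)) / (2*β)) =
            M * (σ' - σ) ^ (1 - 2*β) / 2 := by
          rw [← hdd]; field_simp
        rw [heq2]
        exact half_le_self (mul_nonneg hM0 hdp0)
    refine le_trans (norm_add_le _ _) ?_
    refine le_trans (add_le_add (le_trans (norm_sub_le _ _)
      (add_le_add (le_trans (norm_sub_le _ _) (add_le_add B2 B3)) B1)) B4) ?_
    linarith [hfinal]
  · -- short case: T < max σ' ξ + (σ' - σ)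
    have hTa' : T - max σ' ξ ≤ σ' - σ := by linarith
    have i1 := int σ (max σ ξ) (max σ' ξ) hσa hξa ha0 haa' ha'T
    have i2 := int σ (max σ' ξ) T (le_trans hσa haa') (le_trans hξa haa') ha'0 ha'T le_rfl
    have s1 := intervalIntegral.integral_add_adjacent_intervals i1 i2
    have key : (∫ η in (max σ' ξ)..T, ((η - σ') ^ (-β) * (η - ξ) ^ (-β)) • v η) -
        ∫ η in (max σ ξ)..T, ((η - σ) ^ (-β) * (η - ξ) ^ (-β)) • v η =
        ((∫ η in (max σ' ξ)..T, ((η - σ') ^ (-β) * (η - ξ) ^ (-β)) • v η) -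
          ∫ η in (max σ' ξ)..T, ((η - σ) ^ (-β) * (η - ξ) ^ (-β)) • v η) -
          ∫ η in (max σ ξ)..(max σ' ξ), ((η - σ) ^ (-β) * (η - ξ) ^ (-β)) • v η := by
      rw [← s1]; abel
    rw [key]
    have B1 : ‖∫ η in (max σ ξ)..(max σ' ξ), ((η - σ) ^ (-β) * (η - ξ) ^ (-β)) • v η‖ ≤
        M * (σ' - σ) ^ (1 - 2*β) / (1 - 2*β) :=
      le_trans (bnd σ (max σ ξ) (max σ' ξ) hσa hξa ha0 haa' ha'T)
        (hmono _ (by linarith) (by linarith))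
    have B2 : ‖∫ η in (max σ' ξ)..T, ((η - σ') ^ (-β) * (η - ξ) ^ (-β)) • v η‖ ≤
        M * (σ' - σ) ^ (1 - 2*β) / (1 - 2*β) :=
      le_trans (bnd σ' (max σ' ξ) T hσ'a' hξa' ha'0 ha'T le_rfl)
        (hmono _ (by linarith) hTa')
    have B3 : ‖∫ η in (max σ' ξ)..T, ((η - σ) ^ (-β) * (η - ξ) ^ (-β)) • v η‖ ≤
        M * (σ' - σ) ^ (1 - 2*β) / (1 - 2*β) :=
      le_trans (bnd σ (max σ' ξ) T (le_trans hσa haa') (le_trans hξa haa') ha'0 ha'T le_rfl)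
        (hmono _ (by linarith) hTa')
    refine le_trans (norm_sub_le _ _) ?_
    refine le_trans (add_le_add (le_trans (norm_sub_le _ _) (add_le_add B2 B3)) B1) ?_
    have hmd : (0:ℝ) ≤ M * (σ' - σ) ^ (1 - 2*β) := mul_nonneg hM0 hdp0
    linarith [hfinal]


/-- Uniform continuity, with a modulus depending only on `β` and `T`, of
`v̂(τ, ξ) = ∫_{max(τ,ξ)}^T (η-τ)^{-β} (η-ξ)^{-β} v(η) dη` for continuous `v`. -/
theorem stmt2 (T β : ℝ) (hT : 0 < T) (hβ : β ∈ Set.Ico (0 : ℝ) (1 / 2)) :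
    ∃ ω : ℝ → ℝ, Continuous ω ∧ Monotone ω ∧ ω 0 = 0 ∧ (∀ δ, 0 ≤ ω δ) ∧
      ∀ (k : ℕ) (v : ℝ → EuclideanSpace ℝ (Fin k)), ContinuousOn v (Set.Icc 0 T) →
        ∀ τ ∈ Set.Icc (0:ℝ) T, ∀ τ' ∈ Set.Icc (0:ℝ) T,
          ∀ ξ ∈ Set.Icc (0:ℝ) T, ∀ ξ' ∈ Set.Icc (0:ℝ) T,
            ‖(∫ η in (max τ' ξ')..T, ((η - τ') ^ (-β) * (η - ξ') ^ (-β)) • v η) -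
                ∫ η in (max τ ξ)..T, ((η - τ) ^ (-β) * (η - ξ) ^ (-β)) • v η‖ ≤
              sSup ((fun η => ‖v η‖) '' Set.Icc 0 T) * ω (|τ' - τ| + |ξ' - ξ|) := by
  obtain ⟨hβ0, hβlt⟩ := hβ
  have hβ2 : 2*β < 1 := by linarith
  have hp : 0 < 1 - 2*β := by linarith
  refine ⟨fun δ => (8 / (1 - 2*β)) * (max δ 0) ^ (1 - 2*β), ?_, ?_, ?_, ?_, ?_⟩
  · exact continuous_const.mul
      ((Real.continuous_rpow_const hp.le).comp (continuous_id.max continuous_const))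
  · intro x y hxy
    apply mul_le_mul_of_nonneg_left _ (by positivity)
    exact Real.rpow_le_rpow (le_max_right _ _) (max_le_max hxy le_rfl) hp.le
  · simp [Real.zero_rpow hp.ne']
  · intro δ
    exact mul_nonneg (by positivity) (Real.rpow_nonneg (le_max_right _ _) _)
  · intro k v hv τ hτ τ' hτ' ξ hξ ξ' hξ'
    set M := sSup ((fun η => ‖v η‖) '' Set.Icc 0 T) with hM_def
    have hT0 : (0:ℝ) ≤ T := hT.le
    have hbdd : BddAbove ((fun η => ‖v η‖) '' Set.Icc 0 T) :=
      (isCompact_Icc.image_of_continuousOn hv.norm).bddAbove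
    have hMle : ∀ η ∈ Icc (0:ℝ) T, ‖v η‖ ≤ M := fun η hη => le_csSup hbdd ⟨η, hη, rfl⟩
    have hM0 : 0 ≤ M := le_trans (norm_nonneg (v 0)) (hMle 0 ⟨le_rfl, hT0⟩)
    have core : ∀ σ ∈ Icc (0:ℝ) T, ∀ σ' ∈ Icc (0:ℝ) T, ∀ ζ ∈ Icc (0:ℝ) T,
        ‖(∫ η in (max σ' ζ)..T, ((η - σ') ^ (-β) * (η - ζ) ^ (-β)) • v η) -
            ∫ η in (max σ ζ)..T, ((η - σ) ^ (-β) * (η - ζ) ^ (-β)) • v η‖ ≤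
          M * (4 / (1 - 2*β)) * |σ' - σ| ^ (1 - 2*β) := by
      intro σ hσ σ' hσ' ζ hζ
      rcases le_total σ σ' with h | h
      · rw [abs_of_nonneg (sub_nonneg.2 h)]
        exact aux_core hβ0 hβ2 hv hMle hσ hσ' hζ h
      · rw [abs_of_nonpos (sub_nonpos.2 h), norm_sub_rev, neg_sub]
        exact aux_core hβ0 hβ2 hv hMle hσ' hσ hζ h
    have hsymm : ∀ σ ζ : ℝ,
        (∫ η in (max σ ζ)..T, ((η - σ) ^ (-β) * (η - ζ) ^ (-β)) • v η)
        = ∫ η in (max ζ σ)..T, ((η - ζ) ^ (-β) * (η - σ) ^ (-β)) • v η := by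
      intro σ ζ
      rw [max_comm]
      exact intervalIntegral.integral_congr fun η _ => by rw [mul_comm]
    have tri : (∫ η in (max τ' ξ')..T, ((η - τ') ^ (-β) * (η - ξ') ^ (-β)) • v η) -
        ∫ η in (max τ ξ)..T, ((η - τ) ^ (-β) * (η - ξ) ^ (-β)) • v η =
        ((∫ η in (max τ' ξ')..T, ((η - τ') ^ (-β) * (η - ξ') ^ (-β)) • v η) -
          ∫ η in (max τ' ξ)..T, ((η - τ') ^ (-β) * (η - ξ) ^ (-β)) • v η) +
        ((∫ η in (max τ' ξ)..T, ((η - τ') ^ (-β) * (η - ξ) ^ (-β)) • v η) -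
          ∫ η in (max τ ξ)..T, ((η - τ) ^ (-β) * (η - ξ) ^ (-β)) • v η) := by abel
    have term1 : ‖(∫ η in (max τ' ξ')..T, ((η - τ') ^ (-β) * (η - ξ') ^ (-β)) • v η) -
        ∫ η in (max τ' ξ)..T, ((η - τ') ^ (-β) * (η - ξ) ^ (-β)) • v η‖ ≤
        M * (4 / (1 - 2*β)) * |ξ' - ξ| ^ (1 - 2*β) := by
      rw [hsymm τ' ξ', hsymm τ' ξ]
      exact core ξ hξ ξ' hξ' τ' hτ'
    have term2 : ‖(∫ η in (max τ' ξ)..T, ((η - τ') ^ (-β) * (η - ξ) ^ (-β)) • v η) -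
        ∫ η in (max τ ξ)..T, ((η - τ) ^ (-β) * (η - ξ) ^ (-β)) • v η‖ ≤
        M * (4 / (1 - 2*β)) * |τ' - τ| ^ (1 - 2*β) :=
      core τ hτ τ' hτ' ξ hξ
    have habs1 : |τ' - τ| ^ (1 - 2*β) ≤ (|τ' - τ| + |ξ' - ξ|) ^ (1 - 2*β) :=
      Real.rpow_le_rpow (abs_nonneg _) (by linarith [abs_nonneg (ξ' - ξ)]) hp.le
    have habs2 : |ξ' - ξ| ^ (1 - 2*β) ≤ (|τ' - τ| + |ξ' - ξ|) ^ (1 - 2*β) :=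
      Real.rpow_le_rpow (abs_nonneg _) (by linarith [abs_nonneg (τ' - τ)]) hp.le
    have hc0 : (0:ℝ) ≤ M * (4 / (1 - 2*β)) := mul_nonneg hM0 (by positivity)
    have hmax : max (|τ' - τ| + |ξ' - ξ|) 0 = |τ' - τ| + |ξ' - ξ| :=
      max_eq_left (by positivity)
    show _ ≤ M * ((8 / (1 - 2*β)) * (max (|τ' - τ| + |ξ' - ξ|) 0) ^ (1 - 2*β))
    rw [hmax, tri]
    refine le_trans (norm_add_le _ _) ?_
    have e1 := le_trans term1 (mul_le_mul_of_nonneg_left habs2 hc0)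
    have e2 := le_trans term2 (mul_le_mul_of_nonneg_left habs1 hc0)
    have : M * ((8 / (1 - 2*β)) * (|τ' - τ| + |ξ' - ξ|) ^ (1 - 2*β)) =
        M * (4 / (1 - 2*β)) * (|τ' - τ| + |ξ' - ξ|) ^ (1 - 2*β) +
        M * (4 / (1 - 2*β)) * (|τ' - τ| + |ξ' - ξ|) ^ (1 - 2*β) := by ring
    linarith
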